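/- arXiv:1502.04210 — 2 statements merged into one kernel-verified Lean document; each statement's English description precedes it below -/
import Mathlib

section
/- The map φ : F_4² → M_2(F_2) defined by φ((a+bω, c+dω)) = [[a+d, b+c],[b+c+d, a+b+d]] is a weight isometry: for every α ∈ F_4², the Hamming weight of α (number of nonzero coordinates in F_4²) equals the Bachoc weight of φ(α), where the Bachoc weight of a matrix A ∈ M_2(F_2) is 0 if A = 0, 1 if A is invertible, and 2 otherwise. -/
open Classical in
/-- Hamming weight on K², counting nonzero coordinates. -/
noncomputable def hammingWt {K : Type} [Zero K] (α : K × K) : ℕ :=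
  (if α.1 ≠ 0 then 1 else 0) + (if α.2 ≠ 0 then 1 else 0)

open Classical in
/-- Bachoc weight on M₂(F₂): 0 on the zero matrix, 1 on invertible matrices,
and p = 2 otherwise. -/
noncomputable def bachocWt (A : Matrix (Fin 2) (Fin 2) (ZMod 2)) : ℕ :=
  if A = 0 then 0 else if IsUnit A then 1 else 2

lemma bachocWt_of (a b c d : ZMod 2) :
    bachocWt !![a, b; c, d] =
      if (a = 0 ∧ b = 0 ∧ c = 0 ∧ d = 0) then 0
      else if a * d - b * c = 1 then 1 else 2 := by
  unfold bachocWt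
  have hz : (!![a, b; c, d] = 0) ↔ (a = 0 ∧ b = 0 ∧ c = 0 ∧ d = 0) := by
    constructor
    · intro h
      exact ⟨by simpa using congrFun (congrFun h 0) 0,
             by simpa using congrFun (congrFun h 0) 1,
             by simpa using congrFun (congrFun h 1) 0,
             by simpa using congrFun (congrFun h 1) 1⟩
    · rintro ⟨rfl, rfl, rfl, rfl⟩
      ext i j
      fin_cases i <;> fin_cases j <;> simp
  have hu : IsUnit !![a, b; c, d] ↔ a * d - b * c = 1 := by
    rw [Matrix.isUnit_iff_isUnit_det, Matrix.det_fin_two_of, isUnit_iff_ne_zero]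
    have : ∀ x : ZMod 2, x ≠ 0 ↔ x = 1 := by decide
    exact this _
  simp [hz, hu]

lemma zmod2_cases : ∀ a : ZMod 2, a = 0 ∨ a = 1 := by decide

set_option maxHeartbeats 1600000 in
/-- The map φ : F₄² → M₂(F₂) is a weight isometry from the Hamming weight
to the Bachoc weight. -/
theorem stmt_5 (K : Type) [Field K] [Fintype K] [Algebra (ZMod 2) K]
    (hK : Fintype.card K = 4) (ω : K) (hω : ω ^ 2 = ω + 1)
    (φ : K × K → Matrix (Fin 2) (Fin 2) (ZMod 2))
    (hφ : ∀ a b c d : ZMod 2,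
      φ (algebraMap (ZMod 2) K a + b • ω, algebraMap (ZMod 2) K c + d • ω) =
        !![a + d, b + c; b + c + d, a + b + d]) :
    ∀ α : K × K, hammingWt α = bachocWt (φ α) := by
  have h2 : (1 : K) + 1 = 0 := by
    have : ((1 : ZMod 2) + 1) = 0 := by decide
    calc (1 : K) + 1 = algebraMap (ZMod 2) K (1 + 1) := by simp
    _ = 0 := by rw [this, map_zero]
  have hω0 : ω ≠ 0 := by
    intro h; rw [h] at hω; simp at hω
  have hω1 : ω ≠ 1 := by
    intro h
    apply one_ne_zero (α := K)
    calc (1 : K) = ω ^ 2 - ω := by rw [hω]; ring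
    _ = 0 := by rw [h]; ring
  have h1ω : 1 + ω ≠ 0 := by
    intro h
    apply hω1
    have : ω = -1 := by linear_combination h
    rw [this]
    linear_combination -h2
  have hinj : Function.Injective
      (fun p : ZMod 2 × ZMod 2 => algebraMap (ZMod 2) K p.1 + p.2 • ω) := by
    rintro ⟨a, b⟩ ⟨a', b'⟩ h
    simp only at h
    rcases zmod2_cases a with rfl | rfl <;> rcases zmod2_cases b with rfl | rfl <;>
      rcases zmod2_cases a' with rfl | rfl <;> rcases zmod2_cases b' with rfl | rfl <;>
      simp_all [add_comm]
  have hbij : Function.Bijective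
      (fun p : ZMod 2 × ZMod 2 => algebraMap (ZMod 2) K p.1 + p.2 • ω) := by
    rw [Fintype.bijective_iff_injective_and_card]
    exact ⟨hinj, by simp [hK]⟩
  intro α
  obtain ⟨⟨a, b⟩, hx⟩ := hbij.2 α.1
  obtain ⟨⟨c, d⟩, hy⟩ := hbij.2 α.2
  simp only at hx hy
  have hα : α = (algebraMap (ZMod 2) K a + b • ω, algebraMap (ZMod 2) K c + d • ω) :=
    Prod.ext hx.symm hy.symm
  rw [hα, hφ, bachocWt_of]
  unfold hammingWt
  rcases zmod2_cases a with rfl | rfl <;> rcases zmod2_cases b with rfl | rfl <;>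
    rcases zmod2_cases c with rfl | rfl <;> rcases zmod2_cases d with rfl | rfl <;>
    simp [map_zero, map_one, zero_smul, one_smul, hω0, h1ω] <;> decide
end

section
/- Let C be a [k×ℓ, ρ, δ] linear rank-metric code over F_q. Then the lift Λ(C) = {row space of (I_k | A) : A ∈ C} is a set of k-dimensional subspaces of F_q^{k+ℓ} with |Λ(C)| = q^ρ, and the minimum subspace distance between distinct elements of Λ(C) is 2δ. -/
/-- The row space of the lifted matrix (I_k | A), a subspace of F^{k+ℓ}. -/
def matLift {F : Type} [Field F] {k ℓ : ℕ} (A : Matrix (Fin k) (Fin ℓ) F) :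
    Submodule F (Fin (k + ℓ) → F) :=
  Submodule.span F
    (Set.range fun i : Fin k => Fin.append ((1 : Matrix (Fin k) (Fin k) F) i) (A i))

/-- The subspace distance d_S(U,V) = dim U + dim V - 2 dim(U ⊓ V). -/
noncomputable def subspaceDist {F : Type} [Field F] {n : ℕ}
    (U V : Submodule F (Fin n → F)) : ℕ :=
  Module.finrank F U + Module.finrank F V -
    2 * Module.finrank F (U ⊓ V : Submodule F (Fin n → F))


open Matrix

section aux
variable {F : Type} [Field F] {k ℓ : ℕ}

/-- The lifting linear map x ↦ (x | xA). -/
def liftMap (A : Matrix (Fin k) (Fin ℓ) F) : (Fin k → F) →ₗ[F] (Fin (k + ℓ) → F) where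
  toFun x := Fin.append x (Matrix.vecMul x A)
  map_add' x y := funext fun j => by
    refine Fin.addCases (fun i => ?_) (fun i => ?_) j <;>
      simp [Matrix.add_vecMul, Fin.append_left, Fin.append_right]
  map_smul' c x := funext fun j => by
    refine Fin.addCases (fun i => ?_) (fun i => ?_) j <;>
      simp [Matrix.smul_vecMul, Fin.append_left, Fin.append_right]

@[simp] lemma liftMap_apply (A : Matrix (Fin k) (Fin ℓ) F) (x : Fin k → F) :
    liftMap A x = Fin.append x (Matrix.vecMul x A) := rfl

lemma liftMap_eq_iff (A B : Matrix (Fin k) (Fin ℓ) F) (x y : Fin k → F) :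
    liftMap A x = liftMap B y ↔ x = y ∧ Matrix.vecMul x A = Matrix.vecMul y B := by
  constructor
  · intro h
    constructor
    · funext i
      simpa [Fin.append_left] using congrFun h (Fin.castAdd ℓ i)
    · funext j
      simpa [Fin.append_right] using congrFun h (Fin.natAdd k j)
  · rintro ⟨rfl, h2⟩
    simp [h2]

lemma matLift_eq_range (A : Matrix (Fin k) (Fin ℓ) F) :
    matLift A = LinearMap.range (liftMap A) := by
  rw [matLift, LinearMap.range_eq_map, ← (Pi.basisFun F (Fin k)).span_eq, Submodule.map_span]
  congr 1
  rw [← Set.range_comp]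
  have he : ∀ i : Fin k, (1 : Matrix (Fin k) (Fin k) F) i = Pi.single i 1 := by
    intro i; funext j; simp [Matrix.one_apply, Pi.single_apply, eq_comm]
  have hf : (⇑(liftMap A) ∘ ⇑(Pi.basisFun F (Fin k))) =
      fun i : Fin k => Fin.append ((1 : Matrix (Fin k) (Fin k) F) i) (A i) := by
    funext i
    simp [Function.comp, he, Matrix.single_one_vecMul]
    rfl
  rw [hf]

lemma liftMap_injective (A : Matrix (Fin k) (Fin ℓ) F) : Function.Injective (liftMap A) := by
  intro x y h
  exact ((liftMap_eq_iff A A x y).1 h).1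

lemma finrank_matLift (A : Matrix (Fin k) (Fin ℓ) F) : Module.finrank F (matLift A) = k := by
  rw [matLift_eq_range, LinearMap.finrank_range_of_inj (liftMap_injective A),
    Module.finrank_fin_fun]

lemma matLift_injective : Function.Injective (matLift (F := F) (k := k) (ℓ := ℓ)) := by
  intro A B h
  rw [matLift_eq_range, matLift_eq_range] at h
  funext i j
  have hm : liftMap A (Pi.single i 1) ∈ LinearMap.range (liftMap B) := h ▸ ⟨_, rfl⟩
  obtain ⟨x, hx⟩ := hm
  obtain ⟨rfl, h2⟩ := (liftMap_eq_iff B A x (Pi.single i 1)).1 hx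
  rw [Matrix.single_one_vecMul, Matrix.single_one_vecMul] at h2
  exact (congrFun h2 j).symm

lemma inter_matLift (A B : Matrix (Fin k) (Fin ℓ) F) :
    (matLift A ⊓ matLift B : Submodule F (Fin (k + ℓ) → F)) =
      Submodule.map (liftMap A) (LinearMap.ker ((A - B)ᵀ.mulVecLin)) := by
  ext v
  simp only [matLift_eq_range, Submodule.mem_inf, LinearMap.mem_range, Submodule.mem_map,
    LinearMap.mem_ker, mulVecLin_apply]
  constructor
  · rintro ⟨⟨x, rfl⟩, ⟨y, hy⟩⟩
    obtain ⟨rfl, h2⟩ := (liftMap_eq_iff B A y x).1 hy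
    refine ⟨y, ?_, rfl⟩
    rw [mulVec_transpose, Matrix.vecMul_sub, h2, sub_self]
  · rintro ⟨x, hx, rfl⟩
    rw [mulVec_transpose, Matrix.vecMul_sub, sub_eq_zero] at hx
    exact ⟨⟨x, rfl⟩, ⟨x, ((liftMap_eq_iff B A x x).2 ⟨rfl, hx.symm⟩)⟩⟩

lemma dist_matLift (A B : Matrix (Fin k) (Fin ℓ) F) :
    subspaceDist (matLift A) (matLift B) = 2 * (A - B).rank := by
  have hker : Module.finrank F (matLift A ⊓ matLift B : Submodule F (Fin (k + ℓ) → F)) =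
      Module.finrank F (LinearMap.ker ((A - B)ᵀ.mulVecLin)) := by
    rw [inter_matLift]
    exact (LinearEquiv.finrank_eq
      (Submodule.equivMapOfInjective _ (liftMap_injective A) _)).symm
  have hrn := LinearMap.finrank_range_add_finrank_ker ((A - B)ᵀ.mulVecLin)
  rw [Module.finrank_fin_fun] at hrn
  have hrk : ((A - B)ᵀ).rank = (A - B).rank := Matrix.rank_transpose _
  rw [Matrix.rank] at hrk
  rw [subspaceDist, finrank_matLift, finrank_matLift, hker]
  omega

end aux

/-- The lift of a [k×ℓ, ρ, δ] rank-metric code is a (k+ℓ, q^ρ, 2δ, k)_q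
Grassmannian code. -/
theorem stmt_10 (F : Type) [Field F] [Fintype F] (k ℓ ρ δ : ℕ)
    (C : Submodule F (Matrix (Fin k) (Fin ℓ) F)) (hC : Nontrivial C)
    (hρ : Module.finrank F C = ρ)
    (hδ : sInf {n : ℕ | ∃ A ∈ C, A ≠ 0 ∧ n = A.rank} = δ) :
    (∀ A ∈ C, Module.finrank F (matLift A) = k) ∧
    ((fun A => matLift A) '' (C : Set (Matrix (Fin k) (Fin ℓ) F))).ncard =
      Fintype.card F ^ ρ ∧
    sInf {n : ℕ |
        ∃ U ∈ (fun A => matLift A) '' (C : Set (Matrix (Fin k) (Fin ℓ) F)),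
        ∃ V ∈ (fun A => matLift A) '' (C : Set (Matrix (Fin k) (Fin ℓ) F)),
          U ≠ V ∧ n = subspaceDist U V} = 2 * δ := by
  classical
  have hinj : Function.Injective (fun A : Matrix (Fin k) (Fin ℓ) F => matLift A) :=
    matLift_injective
  obtain ⟨a, ha⟩ := exists_ne (0 : C)
  have hS_ne : {n : ℕ | ∃ A ∈ C, A ≠ 0 ∧ n = A.rank}.Nonempty :=
    ⟨(a : Matrix (Fin k) (Fin ℓ) F).rank, a.1, a.2, fun h => ha (Subtype.ext h), rfl⟩
  refine ⟨fun A _ => finrank_matLift A, ?_, ?_⟩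
  · rw [Set.ncard_image_of_injective _ hinj, ← Nat.card_coe_set_eq]
    haveI : Fintype C := Fintype.ofFinite _
    have h1 : Nat.card ((C : Set (Matrix (Fin k) (Fin ℓ) F))) = Nat.card C := rfl
    rw [h1, Nat.card_eq_fintype_card, Module.card_eq_pow_finrank (K := F) (V := C), hρ]
  · have hδ_mem : δ ∈ {n : ℕ | ∃ A ∈ C, A ≠ 0 ∧ n = A.rank} := by
      rw [← hδ]; exact Nat.sInf_mem hS_ne
    obtain ⟨A₀, hA₀C, hA₀ne, hA₀r⟩ := hδ_mem
    have hmem : 2 * δ ∈ {n : ℕ |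
        ∃ U ∈ (fun A => matLift A) '' (C : Set (Matrix (Fin k) (Fin ℓ) F)),
        ∃ V ∈ (fun A => matLift A) '' (C : Set (Matrix (Fin k) (Fin ℓ) F)),
          U ≠ V ∧ n = subspaceDist U V} := by
      refine ⟨matLift A₀, ⟨A₀, hA₀C, rfl⟩, matLift 0, ⟨0, C.zero_mem, rfl⟩, ?_, ?_⟩
      · intro h; exact hA₀ne (matLift_injective h)
      · rw [dist_matLift, sub_zero, ← hA₀r]
    have hlb : ∀ n ∈ {n : ℕ |
        ∃ U ∈ (fun A => matLift A) '' (C : Set (Matrix (Fin k) (Fin ℓ) F)),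
        ∃ V ∈ (fun A => matLift A) '' (C : Set (Matrix (Fin k) (Fin ℓ) F)),
          U ≠ V ∧ n = subspaceDist U V}, 2 * δ ≤ n := by
      rintro n ⟨U, ⟨A, hA, rfl⟩, V, ⟨B, hB, rfl⟩, hne, rfl⟩
      rw [dist_matLift]
      have hABne : A - B ≠ 0 := sub_ne_zero.2 fun h => hne (by rw [h])
      have hle : δ ≤ (A - B).rank := by
        rw [← hδ]; exact Nat.sInf_le ⟨A - B, C.sub_mem hA hB, hABne, rfl⟩
      omega
    exact le_antisymm (Nat.sInf_le hmem) (le_csInf ⟨_, hmem⟩ hlb)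
end
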